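/- Let u : 2^E → ℝ be an ordinally w-concave function on the subsets of a finite set E. Then for every X, Y ⊆ E and every Z with X ∩ Y ⊆ Z ⊆ X ∪ Y, if u(Z) ≥ u(W) for all W ∈ N(Z) ∩ [X ∩ Y, X ∪ Y], then Z maximizes u over the interval [X ∩ Y, X ∪ Y], i.e., Z ∈ C_u(X ∩ Y, X ∪ Y). -/

import Mathlib

namespace OrdConc

variable {E : Type*} [DecidableEq E]

/-- Membership of an optional element in a finite set: the extra symbol `∅`
(encoded as `none`) always counts as a member of `S ∪ {∅}`. -/
def mem? (x : Option E) (S : Finset E) : Prop :=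
  ∀ a : E, x = some a → a ∈ S

/-- `X − x` (no-op when `x = none`, i.e. the symbol `∅`). -/
def rem (X : Finset E) (x : Option E) : Finset E :=
  x.elim X fun a => X.erase a

/-- `X + x` (no-op when `x = none`, i.e. the symbol `∅`). -/
def add (X : Finset E) (x : Option E) : Finset E :=
  x.elim X fun a => insert a X

/-- `X − x + x'`. -/
def move (X : Finset E) (x x' : Option E) : Finset E :=
  add (rem X x) x'

/-- Ordinal concavity (Definition 1). -/
def OrdinalConcave (u : Finset E → ℝ) : Prop :=
  ∀ X X' : Finset E, ∀ x ∈ X \ X', ∃ x' : Option E, mem? x' (X' \ X) ∧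
    (u X < u (move X (some x) x') ∨
     u X' < u (move X' x' (some x)) ∨
     (u X = u (move X (some x) x') ∧ u X' = u (move X' x' (some x))))

/-- Ordinal weak-concavity (Definition 2). -/
def OrdinalWeakConcave (u : Finset E → ℝ) : Prop :=
  ∀ X X' : Finset E, X ≠ X' → ∃ x x' : Option E, x ≠ x' ∧
    mem? x (X \ X') ∧ mem? x' (X' \ X) ∧
    (u X < u (move X x x') ∨
     u X' < u (move X' x' x) ∨
     (u X = u (move X x x') ∧ u X' = u (move X' x' x)))

/-- An M♮-convex set (family) of subsets of `E`. -/
def MnatConvex (F : Set (Finset E)) : Prop :=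
  ∀ X ∈ F, ∀ X' ∈ F, ∀ x ∈ X \ X', ∃ x' : Option E, mem? x' (X' \ X) ∧
    move X (some x) x' ∈ F ∧ move X' x' (some x) ∈ F

/-- The simultaneous exchange property (†). -/
def Dagger (F : Set (Finset E)) : Prop :=
  ∀ X ∈ F, ∀ X' ∈ F, X ≠ X' → ∃ x x' : Option E, x ≠ x' ∧
    mem? x (X \ X') ∧ mem? x' (X' \ X) ∧
    move X x x' ∈ F ∧ move X' x' x ∈ F

/-- `D*_u`, the family of global maximizers of `u`. -/
def Dstar (u : Finset E → ℝ) : Set (Finset E) :=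
  {X | ∀ Z : Finset E, u Z ≤ u X}

/-- The neighborhood `N(X)`. -/
def Nbhd [Fintype E] (X : Finset E) : Set (Finset E) :=
  {Z | ∃ x x' : Option E, mem? x X ∧ mem? x' (Finset.univ \ X) ∧ Z = move X x x'}

/-- The interval `[X, Y]` in `2^E`. -/
def Interval (X Y : Finset E) : Set (Finset E) :=
  {Z | X ⊆ Z ∧ Z ⊆ Y}

/-- `C_u(X,Y)`, the maximizers of `u` over the interval `[X,Y]`. -/
def CuI (u : Finset E → ℝ) (X Y : Finset E) : Set (Finset E) :=
  {Z | Z ∈ Interval X Y ∧ ∀ W ∈ Interval X Y, u W ≤ u Z}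

/-- `C_u(X)`, the maximizers of `u` among all subsets of `X`. -/
def Cu (u : Finset E → ℝ) (X : Finset E) : Set (Finset E) :=
  {Z | Z ⊆ X ∧ ∀ W ⊆ X, u W ≤ u Z}

/-- Cardinality of the symmetric difference `X Δ Z`. -/
def sdCard (X Z : Finset E) : ℕ := (X \ Z ∪ Z \ X).card

/-- The strict lexicographic order on `ℝ²`. -/
def lexLt (p q : ℝ × ℝ) : Prop := p.1 < q.1 ∨ (p.1 = q.1 ∧ p.2 < q.2)

/-- The (non-strict) lexicographic order on `ℝ²`. -/
def lexLe (p q : ℝ × ℝ) : Prop := lexLt p q ∨ p = q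


lemma mem_move {E : Type*} [DecidableEq E] (W : Finset E) (x x' : Option E) (e : E) :
    e ∈ move W x x' ↔ x' = some e ∨ (x ≠ some e ∧ e ∈ W) := by
  cases x <;> cases x' <;>
    simp [move, add, rem, Finset.mem_insert, Finset.mem_erase, eq_comm]

lemma sd_lt {E : Type*} [DecidableEq E] {Z W : Finset E} {x x' : Option E}
    (hxx' : x ≠ x') (hx : mem? x (Z \ W)) (hx' : mem? x' (W \ Z)) :
    sdCard Z (move W x' x) < sdCard Z W := by
  apply Finset.card_lt_card
  constructor
  · intro e he
    rcases Finset.mem_union.1 he with he | he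
    · rcases Finset.mem_sdiff.1 he with ⟨heZ, heW'⟩
      rw [mem_move] at heW'
      push_neg at heW'
      obtain ⟨h1, h2⟩ := heW'
      by_cases hxe : x' = some e
      · exact absurd ((Finset.mem_sdiff.1 (hx' e hxe)).2) (fun h => h heZ)
      · exact Finset.mem_union.2 (Or.inl (Finset.mem_sdiff.2 ⟨heZ, h2 hxe⟩))
    · rcases Finset.mem_sdiff.1 he with ⟨heW', heZ⟩
      rw [mem_move] at heW'
      rcases heW' with h | h
      · exact absurd ((Finset.mem_sdiff.1 (hx e h)).1) heZ
      · exact Finset.mem_union.2 (Or.inr (Finset.mem_sdiff.2 ⟨h.2, heZ⟩))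
  · intro hsub
    cases x with
    | some a =>
      have haZ : a ∈ Z \ W := hx a rfl
      have haW' : a ∈ move W x' (some a) := (mem_move _ _ _ _).2 (Or.inl rfl)
      have := hsub (Finset.mem_union.2 (Or.inl haZ))
      rcases Finset.mem_union.1 this with h | h
      · exact (Finset.mem_sdiff.1 h).2 haW'
      · exact (Finset.mem_sdiff.1 h).2 (Finset.mem_sdiff.1 haZ).1
    | none =>
      cases x' with
      | none => exact hxx' rfl
      | some b =>
        have hbW : b ∈ W \ Z := hx' b rfl
        have hbW' : b ∉ move W (some b) none := by
          rw [mem_move]; rintro (h | h)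
          · exact nomatch h
          · exact h.1 rfl
        have := hsub (Finset.mem_union.2 (Or.inr hbW))
        rcases Finset.mem_union.1 this with h | h
        · exact (Finset.mem_sdiff.1 hbW).2 (Finset.mem_sdiff.1 h).1
        · exact hbW' (Finset.mem_sdiff.1 h).1

theorem local_max_on_interval_is_global {E : Type*} [DecidableEq E] [Fintype E]
    (u : Finset E → ℝ) (hu : OrdinalWeakConcave u)
    (X Y Z : Finset E) (hZ : Z ∈ Interval (X ∩ Y) (X ∪ Y))
    (hloc : ∀ W ∈ Nbhd Z ∩ Interval (X ∩ Y) (X ∪ Y), u W ≤ u Z) :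
    Z ∈ CuI u (X ∩ Y) (X ∪ Y) := by
  refine ⟨hZ, ?_⟩
  obtain ⟨hZlo, hZhi⟩ := hZ
  suffices key : ∀ n : ℕ, ∀ W : Finset E, W ∈ Interval (X ∩ Y) (X ∪ Y) →
      sdCard Z W ≤ n → u W ≤ u Z by
    exact fun W hW => key (sdCard Z W) W hW le_rfl
  intro n
  induction n with
  | zero =>
    intro W hW hcard
    have h0 : (Z \ W ∪ W \ Z) = ∅ := Finset.card_eq_zero.1 (Nat.le_zero.1 hcard)
    have hZW : Z = W := by
      apply Finset.Subset.antisymm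
      · intro e he
        by_contra heW
        have : e ∈ Z \ W ∪ W \ Z := Finset.mem_union.2 (Or.inl (Finset.mem_sdiff.2 ⟨he, heW⟩))
        simp [h0] at this
      · intro e he
        by_contra heZ
        have : e ∈ Z \ W ∪ W \ Z := Finset.mem_union.2 (Or.inr (Finset.mem_sdiff.2 ⟨he, heZ⟩))
        simp [h0] at this
    rw [← hZW]
  | succ n ih =>
    intro W hW hcard
    obtain ⟨hWlo, hWhi⟩ := hW
    by_cases hZW : Z = W
    · rw [← hZW]
    obtain ⟨x, x', hxx', hx, hx', hcase⟩ := hu Z W hZW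
    -- move Z x x' is in the neighborhood and the interval
    have hnb : move Z x x' ∈ Nbhd Z := by
      refine ⟨x, x', ?_, ?_, rfl⟩
      · intro a ha; exact (Finset.mem_sdiff.1 (hx a ha)).1
      · intro a ha
        exact Finset.mem_sdiff.2 ⟨Finset.mem_univ a, (Finset.mem_sdiff.1 (hx' a ha)).2⟩
    have hint : move Z x x' ∈ Interval (X ∩ Y) (X ∪ Y) := by
      constructor
      · intro e he
        rw [mem_move]
        refine Or.inr ⟨?_, hZlo he⟩
        intro hxe
        exact (Finset.mem_sdiff.1 (hx e hxe)).2 (hWlo he)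
      · intro e he
        rw [mem_move] at he
        rcases he with h | h
        · exact hWhi (Finset.mem_sdiff.1 (hx' e h)).1
        · exact hZhi h.2
    have hmleZ : u (move Z x x') ≤ u Z := hloc _ ⟨hnb, hint⟩
    -- move W x' x is in the interval with smaller symmetric difference
    have hint' : move W x' x ∈ Interval (X ∩ Y) (X ∪ Y) := by
      constructor
      · intro e he
        rw [mem_move]
        refine Or.inr ⟨?_, hWlo he⟩
        intro hxe
        exact (Finset.mem_sdiff.1 (hx' e hxe)).2 (hZlo he)
      · intro e he
        rw [mem_move] at he
        rcases he with h | h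
        · exact hZhi (Finset.mem_sdiff.1 (hx e h)).1
        · exact hWhi h.2
    have hlt : sdCard Z (move W x' x) < sdCard Z W := sd_lt hxx' hx hx'
    have hih : u (move W x' x) ≤ u Z :=
      ih (move W x' x) hint' (by omega)
    rcases hcase with h | h | h
    · linarith
    · linarith
    · linarith [h.2]
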